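/- Let a, b ≥ 1, let τ be an (a·b)×(a·b) density matrix on the Kronecker-product space ℂ^a ⊗ ℂ^b, and let e ∈ ℂ^a be a unit vector. Then Tr[(e·eᴴ ⊗ I_b)·τ] = 1 if and only if there exists a b×b density matrix σ such that τ = (e·eᴴ) ⊗ σ, where ⊗ denotes the Kronecker product and I_b is the b×b identity matrix. -/

import Mathlib

open Matrix
open scoped ComplexOrder Kronecker

private lemma trace_conjT_mul_self_eq_zero {n m : Type*} [Fintype n] [Fintype m]
    (A : Matrix n m ℂ) (h : Matrix.trace (Aᴴ * A) = 0) : A = 0 := by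
  have h' : ∑ j, ∑ i, Complex.normSq (A i j) = 0 := by
    have h2 : (↑(∑ j, ∑ i, Complex.normSq (A i j)) : ℂ) = 0 := by
      push_cast
      rw [← h]
      simp only [Matrix.trace, Matrix.diag, Matrix.mul_apply, Matrix.conjTranspose_apply]
      congr 1; ext j; congr 1; ext i
      rw [Complex.normSq_eq_conj_mul_self]; rfl
    exact_mod_cast h2
  ext i j
  have h3 := (Finset.sum_eq_zero_iff_of_nonneg
    (fun j _ => Finset.sum_nonneg fun i _ => Complex.normSq_nonneg _)).mp h' j (Finset.mem_univ j)
  have h4 := (Finset.sum_eq_zero_iff_of_nonneg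
    (fun i _ => Complex.normSq_nonneg _)).mp h3 i (Finset.mem_univ i)
  simpa using Complex.normSq_eq_zero.mp h4


/-- Exact decoupling: for a density matrix `τ` on `ℂ^a ⊗ ℂ^b` and a unit vector
`e ∈ ℂ^a`, `Tr[(e·eᴴ ⊗ I_b)·τ] = 1` iff `τ = (e·eᴴ) ⊗ σ` for some `b × b`
density matrix `σ`. -/
theorem trace_eq_one_iff_decoupled
    (a b : ℕ) (ha : 1 ≤ a) (hb : 1 ≤ b)
    (τ : Matrix (Fin a × Fin b) (Fin a × Fin b) ℂ)
    (hτ_psd : τ.PosSemidef) (hτ_tr : Matrix.trace τ = 1)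
    (e : Fin a → ℂ) (he : star e ⬝ᵥ e = 1) :
    Matrix.trace ((Matrix.vecMulVec e (star e) ⊗ₖ (1 : Matrix (Fin b) (Fin b) ℂ)) * τ) = 1
      ↔ ∃ σ : Matrix (Fin b) (Fin b) ℂ, σ.PosSemidef ∧ Matrix.trace σ = 1 ∧
          τ = Matrix.vecMulVec e (star e) ⊗ₖ σ := by
  have hee : Matrix.vecMulVec e (star e) * Matrix.vecMulVec e (star e)
      = Matrix.vecMulVec e (star e) := by
    ext i j
    simp only [Matrix.mul_apply, Matrix.vecMulVec_apply, Pi.star_apply]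
    have : ∑ k, e i * star (e k) * (e k * star (e j))
        = (∑ k, star (e k) * e k) * (e i * star (e j)) := by
      rw [Finset.sum_mul]; congr 1; ext k; ring
    rw [this, show (∑ k, star (e k) * e k) = star e ⬝ᵥ e from rfl, he, one_mul]
  have htre : Matrix.trace (Matrix.vecMulVec e (star e)) = 1 := by
    simp only [Matrix.trace, Matrix.diag, Matrix.vecMulVec_apply, Pi.star_apply]
    rw [← he]; simp [dotProduct, mul_comm]
  set P := Matrix.vecMulVec e (star e) ⊗ₖ (1 : Matrix (Fin b) (Fin b) ℂ) with hP
  constructor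
  · intro h1
    -- Q = 1 - P kills τ
    have hPH : Pᴴ = P := by
      ext ⟨i, j⟩ ⟨k, l⟩
      simp only [hP, Matrix.conjTranspose_apply, Matrix.kroneckerMap_apply,
        Matrix.vecMulVec_apply, Pi.star_apply, Matrix.one_apply, star_mul']
      by_cases hjl : j = l <;> simp [hjl, eq_comm, mul_comm]
    have hPP : P * P = P := by
      rw [hP, ← Matrix.mul_kronecker_mul, hee, one_mul]
    set Q : Matrix (Fin a × Fin b) (Fin a × Fin b) ℂ := 1 - P with hQ
    have hQH : Qᴴ = Q := by rw [hQ, Matrix.conjTranspose_sub, Matrix.conjTranspose_one, hPH]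
    have hQQ : Q * Q = Q := by
      rw [hQ]; simp [Matrix.sub_mul, Matrix.mul_sub, hPP]
    have htrQτ : Matrix.trace (Q * τ) = 0 := by
      rw [hQ, Matrix.sub_mul, Matrix.one_mul, Matrix.trace_sub, hτ_tr, h1, sub_self]
    obtain ⟨B, hBB, hBH⟩ : ∃ B : Matrix (Fin a × Fin b) (Fin a × Fin b) ℂ, B * B = τ ∧ Bᴴ = B := by
      open scoped MatrixOrder in
      exact ⟨CFC.sqrt τ, CFC.sqrt_mul_sqrt_self τ hτ_psd.nonneg, (CFC.sqrt_nonneg τ).isSelfAdjoint⟩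
    have hM : B * Q = 0 := by
      apply trace_conjT_mul_self_eq_zero
      have : (B * Q)ᴴ * (B * Q) = Q * τ * Q := by
        rw [Matrix.conjTranspose_mul, hQH, hBH,
          show Q * B * (B * Q) = Q * (B * B) * Q by simp only [Matrix.mul_assoc], hBB]
      rw [this, Matrix.trace_mul_cycle, hQQ, htrQτ]
    have hτQ : τ * Q = 0 := by
      rw [← hBB, Matrix.mul_assoc, hM, Matrix.mul_zero]
    have hQτ : Q * τ = 0 := by
      have := congrArg Matrix.conjTranspose hτQ
      rwa [Matrix.conjTranspose_mul, hQH, hτ_psd.isHermitian.eq, Matrix.conjTranspose_zero] at this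
    have hτP : τ = P * τ * P := by
      have h5 : P * τ = τ := by
        have : (1 - Q) * τ = τ - Q * τ := by rw [Matrix.sub_mul, Matrix.one_mul]
        rw [hQ] at this; simp only [sub_sub_cancel] at this
        rw [this, hQτ, sub_zero]
      have h6 : τ * P = τ := by
        have : τ * (1 - Q) = τ - τ * Q := by rw [Matrix.mul_sub, Matrix.mul_one]
        rw [hQ] at this; simp only [sub_sub_cancel] at this
        rw [this, hτQ, sub_zero]
      rw [h5, h6]
    -- define σ
    set C : Matrix (Fin a × Fin b) (Fin b) ℂ :=
      Matrix.of (fun p j => e p.1 * (if p.2 = j then 1 else 0)) with hC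
    refine ⟨Cᴴ * τ * C, hτ_psd.conjTranspose_mul_mul_same C, ?_, ?_⟩
    · -- trace = 1
      have hσ : ∀ j j', (Cᴴ * τ * C) j j'
          = ∑ k, ∑ k', star (e k) * τ (k, j) (k', j') * e k' := by
        intro j j'
        simp only [Matrix.mul_apply, Matrix.conjTranspose_apply, hC, Matrix.of_apply,
          Fintype.sum_prod_type, star_mul', mul_ite, ite_mul, mul_one, mul_zero, one_mul,
          zero_mul, apply_ite (star : ℂ → ℂ), star_one, star_zero, Finset.sum_ite_eq, Finset.sum_ite_eq',
          Finset.mem_univ, if_true, Finset.sum_mul]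
        rw [Finset.sum_comm]
      have htrP : Matrix.trace (P * τ)
          = ∑ j, ∑ k, ∑ k', star (e k) * τ (k, j) (k', j) * e k' := by
        simp only [Matrix.trace, Matrix.diag, Matrix.mul_apply, hP,
          Matrix.kroneckerMap_apply, Matrix.vecMulVec_apply, Pi.star_apply, Matrix.one_apply,
          Fintype.sum_prod_type, mul_ite, ite_mul, mul_one, mul_zero, one_mul, zero_mul,
          Finset.sum_ite_eq, Finset.sum_ite_eq', Finset.mem_univ, if_true]
        rw [Finset.sum_comm]
        congr 1; ext j
        rw [Finset.sum_comm]
        congr 1; ext k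
        congr 1; ext k'
        ring
      have : Matrix.trace (Cᴴ * τ * C)
          = ∑ j, ∑ k, ∑ k', star (e k) * τ (k, j) (k', j) * e k' := by
        simp only [Matrix.trace, Matrix.diag]
        exact Finset.sum_congr rfl fun j _ => hσ j j
      rw [this, ← htrP, h1]
    · -- τ = eeᴴ ⊗ σ
      have hσ : ∀ j j', (Cᴴ * τ * C) j j'
          = ∑ k, ∑ k', star (e k) * τ (k, j) (k', j') * e k' := by
        intro j j'
        simp only [Matrix.mul_apply, Matrix.conjTranspose_apply, hC, Matrix.of_apply,
          Fintype.sum_prod_type, star_mul', mul_ite, ite_mul, mul_one, mul_zero, one_mul,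
          zero_mul, apply_ite (star : ℂ → ℂ), star_one, star_zero, Finset.sum_ite_eq, Finset.sum_ite_eq',
          Finset.mem_univ, if_true, Finset.sum_mul]
        rw [Finset.sum_comm]
      conv_lhs => rw [hτP]
      apply Matrix.ext
      rintro ⟨i, j⟩ ⟨i', j'⟩
      simp only [Matrix.kroneckerMap_apply, Matrix.vecMulVec_apply, Pi.star_apply, hσ]
      simp only [Matrix.mul_apply, hP, Matrix.kroneckerMap_apply, Matrix.vecMulVec_apply,
        Pi.star_apply, Matrix.one_apply, Fintype.sum_prod_type, mul_ite, ite_mul, mul_one,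
        mul_zero, one_mul, zero_mul, Finset.sum_ite_eq, Finset.sum_ite_eq', Finset.mem_univ,
        if_true]
      simp only [Finset.sum_mul]
      conv_lhs => rw [Finset.sum_comm]
      rw [Finset.mul_sum]
      congr 1; ext k
      rw [Finset.mul_sum]
      congr 1; ext k'
      ring
  · rintro ⟨σ, hσ_psd, hσ_tr, rfl⟩
    rw [hP, ← Matrix.mul_kronecker_mul, hee, Matrix.one_mul, Matrix.trace_kronecker,
      htre, hσ_tr, one_mul]
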